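/- Let n, k, j be positive integers with ⌊n/j⌋ > k. Then every simple graph G that contains every graph on n vertices of treewidth at most k has at least j·k vertices of degree at least ⌊n/j⌋ − k. -/

import Mathlib

/-- `G` contains `H`: there is an injective map from the vertices of `H` to those of `G`
sending adjacent vertices to adjacent vertices. -/
def Contains {α β : Type*} (G : SimpleGraph β) (H : SimpleGraph α) : Prop :=
  ∃ f : α → β, Function.Injective f ∧ ∀ u v : α, H.Adj u v → G.Adj (f u) (f v)

/-- `G` has a tree-decomposition of width at most `k`: bags `B x` indexed by the vertices of a
tree `S`, such that for every vertex `u` of `G` the set of indices whose bag contains `u`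
induces a nonempty connected subgraph of `S`, every edge of `G` lies in some bag, and every bag
has at most `k + 1` vertices. -/
def HasTreeDecompWidthLe {V : Type*} (G : SimpleGraph V) (k : ℕ) : Prop :=
  ∃ (ι : Type) (S : SimpleGraph ι) (B : ι → Set V),
    S.IsTree ∧
    (∀ u : V, (S.induce {x | u ∈ B x}).Connected) ∧
    (∀ u v : V, G.Adj u v → ∃ x, u ∈ B x ∧ v ∈ B x) ∧
    (∀ x, (B x).ncard ≤ k + 1)


open SimpleGraph



lemma aux_div {m c p : ℕ} (hm : 0 < m) (hp : p < m) : (m * c + p) / m = c := by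
  rw [Nat.mul_add_div hm, Nat.div_eq_of_lt hp]; omega
lemma aux_mod {m c p : ℕ} (hp : p < m) : (m * c + p) % m = p := by
  rw [Nat.mul_add_mod, Nat.mod_eq_of_lt hp]

lemma sdiff_walk_side {n : ℕ} (v w : Fin n) (hvw : v.val + 1 = w.val) :
    ∀ {x y : Fin n}, ((pathGraph n) \ SimpleGraph.fromEdgeSet {s(v,w)}).Walk x y →
      (x.val ≤ v.val ↔ y.val ≤ v.val) := by
  intro x y p
  induction p with
  | nil => exact Iff.rfl
  | @cons a b c h p ih =>
    have h' : ((a.val + 1 = b.val ∨ b.val + 1 = a.val)) ∧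
        ¬((a = v ∧ b = w) ∨ (a = w ∧ b = v)) := by
      simp only [SimpleGraph.sdiff_adj, SimpleGraph.fromEdgeSet_adj, Set.mem_singleton_iff,
        pathGraph_adj, Sym2.eq_iff] at h
      exact ⟨h.1, fun hc => h.2 ⟨hc, h.1.elim (fun e => by omega) (fun e => by omega)⟩⟩
    rw [← ih]
    simp only [Fin.ext_iff] at h'
    omega

lemma pathGraph_bridge {n : ℕ} (v w : Fin n) (hvw : v.val + 1 = w.val) :
    (pathGraph n).IsBridge s(v, w) := by
  rw [isBridge_iff]
  refine (fun (_ : (pathGraph n).Adj v w) (h : ¬((pathGraph n).deleteEdges {s(v, w)}).Reachable v w) => h) ?_ ?_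
  · rw [pathGraph_adj]; exact Or.inl hvw
  · rintro ⟨p⟩
    have := sdiff_walk_side v w hvw p
    omega

lemma pathGraph_isAcyclic (n : ℕ) : (pathGraph n).IsAcyclic := by
  rw [isAcyclic_iff_forall_adj_isBridge]
  intro v w hadj
  rw [pathGraph_adj] at hadj
  rcases hadj with h | h
  · exact pathGraph_bridge v w h
  · rw [Sym2.eq_swap]; exact pathGraph_bridge w v h

lemma pathGraph_isTree {n : ℕ} (hn : 0 < n) : (pathGraph n).IsTree := by
  obtain ⟨n, rfl⟩ : ∃ m, n = m + 1 := ⟨n - 1, by omega⟩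
  exact ⟨pathGraph_connected n, pathGraph_isAcyclic _⟩

/-- Induced subgraph of pathGraph on an interval is connected. -/
lemma interval_connected {n a b : ℕ} (u : Fin n) (hua : a ≤ u.val) (hub : u.val < b) :
    ((pathGraph n).induce {x : Fin n | a ≤ x.val ∧ x.val < b}).Connected := by
  set s : Set (Fin n) := {x : Fin n | a ≤ x.val ∧ x.val < b} with hs
  have hreach : ∀ (d : ℕ) (x y : s), (y : Fin n).val = (x : Fin n).val + d →
      ((pathGraph n).induce s).Reachable x y := by
    intro d
    induction d with
    | zero => intro x y hxy; have : x = y := by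
                ext; exact hxy.symm
              rw [this]
    | succ d ih =>
      intro x y hxy
      have hyb : (y : Fin n).val < b := y.2.2
      have hax : a ≤ (x : Fin n).val := x.2.1
      have hz : (x : Fin n).val + d < n := by have := (y : Fin n).isLt; omega
      have hmem : (⟨(x : Fin n).val + d, hz⟩ : Fin n) ∈ s := by
        show a ≤ (x : Fin n).val + d ∧ (x : Fin n).val + d < b
        omega
      refine (ih x ⟨⟨(x : Fin n).val + d, hz⟩, hmem⟩ rfl).trans ?_
      refine Adj.reachable ?_
      simp only [comap_adj, Function.Embedding.coe_subtype, pathGraph_adj]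
      left
      show (x : Fin n).val + d + 1 = (y : Fin n).val
      omega
  have : Nonempty s := ⟨⟨u, hua, hub⟩⟩
  refine ⟨fun x y => ?_⟩
  rcases Nat.le_total (x : Fin n).val (y : Fin n).val with h | h
  · exact hreach ((y : Fin n).val - (x : Fin n).val) x y (by omega)
  · exact (hreach ((x : Fin n).val - (y : Fin n).val) y x (by omega)).symm

lemma singleton_connected {α : Type*} (G : SimpleGraph α) (u : α) :
    (G.induce {u}).Connected := by
  have : Nonempty ({u} : Set α) := ⟨⟨u, rfl⟩⟩
  refine ⟨fun x y => ?_⟩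
  have hxy : x = y := Subtype.ext (x.2.trans y.2.symm)
  rw [hxy]

lemma idx_lt {n m j c p : ℕ} (hjm : j * m ≤ n) (hc : c < j) (hp : p < m) : m * c + p < n := by
  have h1 : m * (c + 1) ≤ m * j := Nat.mul_le_mul_left m hc
  have h2 : m * (c + 1) = m * c + m := by ring
  have h3 : m * j = j * m := Nat.mul_comm m j
  omega
/-- If `⌊n/j⌋ > k` then every graph containing every `n`-vertex graph of treewidth at most `k`
has at least `j·k` vertices of degree at least `⌊n/j⌋ − k`. -/
theorem statement15 (n k j : ℕ) (hn : 0 < n) (hk : 0 < k) (hj : 0 < j)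
    (hfloor : k < n / j) (V : Type) [Fintype V] (G : SimpleGraph V)
    (huniv : ∀ H : SimpleGraph (Fin n), HasTreeDecompWidthLe H k → Contains G H) :
    j * k ≤ {v : V | n / j - k ≤ (G.neighborSet v).ncard}.ncard := by
  set m := n / j with hmdef
  have hm : k < m := hfloor
  have hm0 : 0 < m := by omega
  have hjm : j * m ≤ n := by
    rw [hmdef, mul_comm]; exact Nat.div_mul_le_self n j
  -- the witness graph: j disjoint copies of (K_k joined to an independent set of size m-k)
  let H : SimpleGraph (Fin n) :=
    { Adj := fun a b => a ≠ b ∧ a.val < j * m ∧ b.val < j * m ∧ a.val / m = b.val / m ∧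
        (a.val % m < k ∨ b.val % m < k)
      symm := ⟨by
        rintro a b ⟨h1, h2, h3, h4, h5⟩
        exact ⟨h1.symm, h3, h2, h4.symm, h5.symm⟩⟩
      loopless := ⟨fun a h => h.1 rfl⟩ }
  have hHtw : HasTreeDecompWidthLe H k := by
    refine ⟨Fin n, pathGraph n,
      fun t => if t.val < j * m then
        ({i : Fin n | i.val < j * m ∧ i.val / m = t.val / m ∧ i.val % m < k} ∪ {t})
      else {t}, pathGraph_isTree hn, ?_, ?_, ?_⟩
    · -- connectivity of index sets
      intro u
      dsimp only
      by_cases hcase : u.val < j * m ∧ u.val % m < k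
      · obtain ⟨c, hc⟩ : ∃ c, u.val / m = c := ⟨_, rfl⟩
        have hcj : c < j := by
          rw [← hc, Nat.div_lt_iff_lt_mul hm0, mul_comm j m] at *
          exact hcase.1
        have hcomm : m * c = c * m := Nat.mul_comm m c
        have hdm : m * c + u.val % m = u.val := by rw [← hc]; exact Nat.div_add_mod u.val m
        have humod : u.val % m < m := Nat.mod_lt _ hm0
        have hcm : c * m + m ≤ j * m := by
          have h1 : (c + 1) * m ≤ j * m := Nat.mul_le_mul_right m (by omega)
          have h2 : (c + 1) * m = c * m + m := by ring
          omega
        have hset : {x : Fin n | u ∈ (if x.val < j * m then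
              ({i : Fin n | i.val < j * m ∧ i.val / m = x.val / m ∧ i.val % m < k} ∪ {x})
            else {x})} = {x : Fin n | c * m ≤ x.val ∧ x.val < c * m + m} := by
          ext x
          simp only [Set.mem_setOf_eq]
          by_cases hx : x.val < j * m
          · rw [if_pos hx]
            simp only [Set.mem_union, Set.mem_setOf_eq, Set.mem_singleton_iff]
            constructor
            · rintro (⟨_, hdiv, _⟩ | rfl)
              · have hxd : m * (x.val / m) + x.val % m = x.val := Nat.div_add_mod x.val m
                have hxmod : x.val % m < m := Nat.mod_lt _ hm0
                rw [← hdiv, hc] at hxd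
                constructor <;> omega
              · constructor <;> omega
            · rintro ⟨h1, h2⟩
              left
              have hxdiv : x.val / m = c := by
                apply Nat.div_eq_of_lt_le (by omega)
                rw [Nat.succ_mul]; omega
              exact ⟨hcase.1, hc.trans hxdiv.symm, hcase.2⟩
          · rw [if_neg hx]
            simp only [Set.mem_singleton_iff]
            constructor
            · rintro rfl; exact absurd hcase.1 hx
            · rintro ⟨h1, h2⟩; omega
        rw [hset]
        exact interval_connected u (by omega) (by omega)
      · have hset : {x : Fin n | u ∈ (if x.val < j * m then
              ({i : Fin n | i.val < j * m ∧ i.val / m = x.val / m ∧ i.val % m < k} ∪ {x})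
            else {x})} = {u} := by
          ext x
          simp only [Set.mem_setOf_eq, Set.mem_singleton_iff]
          by_cases hx : x.val < j * m
          · rw [if_pos hx]
            simp only [Set.mem_union, Set.mem_setOf_eq, Set.mem_singleton_iff]
            constructor
            · rintro (⟨h1, h2, h3⟩ | rfl)
              · exact absurd ⟨h1, h3⟩ hcase
              · rfl
            · rintro rfl; right; rfl
          · rw [if_neg hx]
            simp only [Set.mem_singleton_iff]
            exact ⟨fun h => h.symm, fun h => h.symm⟩
        rw [hset]
        exact singleton_connected _ u
    · -- every edge lies in a bag
      rintro u v ⟨hne, hu, hv, hdiv, hor⟩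
      dsimp only
      rcases hor with h | h
      · refine ⟨v, ?_, ?_⟩
        · rw [if_pos hv]; left; exact ⟨hu, hdiv, h⟩
        · rw [if_pos hv]; right; rfl
      · refine ⟨u, ?_, ?_⟩
        · rw [if_pos hu]; right; rfl
        · rw [if_pos hu]; left; exact ⟨hv, hdiv.symm, h⟩
    · -- bag sizes
      intro t
      dsimp only
      by_cases ht : t.val < j * m
      · rw [if_pos ht]
        set c := t.val / m with hc
        have hcomm : m * c = c * m := Nat.mul_comm m c
        have hsub : ({i : Fin n | i.val < j * m ∧ i.val / m = t.val / m ∧ i.val % m < k} ∪ {t}) ⊆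
            insert t {i : Fin n | c * m ≤ i.val ∧ i.val < c * m + k} := by
          rintro i (⟨h1, h2, h3⟩ | rfl)
          · right
            have hxd : m * (i.val / m) + i.val % m = i.val := Nat.div_add_mod i.val m
            rw [h2, ← hc] at hxd
            exact ⟨by omega, by omega⟩
          · left; rfl
        have hI : ({i : Fin n | c * m ≤ i.val ∧ i.val < c * m + k}).ncard ≤ k := by
          have h := Set.ncard_le_ncard_of_injOn
            (s := {i : Fin n | c * m ≤ i.val ∧ i.val < c * m + k})
            (t := (Set.univ : Set (Fin k)))
            (fun i : Fin n => (⟨(i.val - c * m) % k, Nat.mod_lt _ hk⟩ : Fin k))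
            (fun a _ => Set.mem_univ _) ?_ (Set.toFinite _)
          · simpa [Set.ncard_univ] using h
          · intro i1 h1 i2 h2 heq
            simp only [Set.mem_setOf_eq] at h1 h2
            have e1 : (i1.val - c * m) % k = i1.val - c * m := Nat.mod_eq_of_lt (by omega)
            have e2 : (i2.val - c * m) % k = i2.val - c * m := Nat.mod_eq_of_lt (by omega)
            have := congrArg Fin.val heq
            simp only [e1, e2] at this
            exact Fin.ext (by omega)
        calc _ ≤ (insert t {i : Fin n | c * m ≤ i.val ∧ i.val < c * m + k}).ncard :=
              Set.ncard_le_ncard hsub (Set.toFinite _)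
          _ ≤ _ + 1 := Set.ncard_insert_le _ _
          _ ≤ k + 1 := by omega
      · rw [if_neg ht]
        simp [Set.ncard_singleton]
  obtain ⟨f, finj, fadj⟩ := huniv H hHtw
  have hdeg : ∀ (c : Fin j) (p : Fin k),
      m - k ≤ (G.neighborSet (f ⟨m * c.val + p.val, idx_lt hjm c.isLt (by omega)⟩)).ncard := by
    intro c p
    have h := Set.ncard_le_ncard_of_injOn
      (fun q : Fin (m - k) =>
        f ⟨m * c.val + (k + q.val), idx_lt hjm c.isLt (by omega)⟩)
      (s := (Set.univ : Set (Fin (m - k))))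
      (t := G.neighborSet (f ⟨m * c.val + p.val, idx_lt hjm c.isLt (by omega)⟩))
      ?_ ?_ (Set.toFinite _)
    · simpa [Set.ncard_univ] using h
    · intro q _
      apply fadj
      refine ⟨?_, idx_lt (le_refl (j * m)) c.isLt (by omega),
        idx_lt (le_refl (j * m)) c.isLt (by omega), ?_, ?_⟩
      · intro hcon
        have := congrArg Fin.val hcon
        simp only at this
        omega
      · show (m * c.val + p.val) / m = (m * c.val + (k + q.val)) / m
        rw [aux_div hm0 (by omega), aux_div hm0 (by omega)]
      · left
        show (m * c.val + p.val) % m < k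
        rw [aux_mod (by omega)]
        exact p.isLt
    · intro q1 _ q2 _ heq
      have := congrArg Fin.val (finj heq)
      simp only at this
      exact Fin.ext (by omega)
  have h := Set.ncard_le_ncard_of_injOn
    (fun cp : Fin j × Fin k =>
      f ⟨m * cp.1.val + cp.2.val, idx_lt hjm cp.1.isLt (by omega)⟩)
    (s := (Set.univ : Set (Fin j × Fin k)))
    (t := {v : V | m - k ≤ (G.neighborSet v).ncard})
    (fun cp _ => hdeg cp.1 cp.2) ?_ (Set.toFinite _)
  · simpa [Set.ncard_univ] using h
  · intro cp1 _ cp2 _ heq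
    have hv := congrArg Fin.val (finj heq)
    simp only at hv
    have hc1 : cp1.1.val = (m * cp1.1.val + cp1.2.val) / m := (aux_div hm0 (by omega)).symm
    have hp1 : cp1.2.val = (m * cp1.1.val + cp1.2.val) % m := (aux_mod (by omega)).symm
    have hc2 : cp2.1.val = (m * cp2.1.val + cp2.2.val) / m := (aux_div hm0 (by omega)).symm
    have hp2 : cp2.2.val = (m * cp2.1.val + cp2.2.val) % m := (aux_mod (by omega)).symm
    rw [hv] at hc1 hp1
    exact Prod.ext (Fin.ext (by omega)) (Fin.ext (by omega))
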